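/- (The radiative energy–momentum is divergence-free.) Let F : Ω → ℝ be smooth with k^a ∂F/∂x^a = 0 on Ω (F is constant along the outgoing null rays, i.e. ∂F/∂r = 0). Then the field t^{ij} = F r^{−2} k^i k^j satisfies ∂t^{ij}/∂x^j = 0 on Ω for every i (sum over j). -/

import Mathlib

open scoped BigOperators

noncomputable section

/-- The Minkowski metric η = diag(−1,1,1,1) on ℝ⁴. -/
def eta (i j : Fin 4) : ℝ := if i = j then (if i = 0 then -1 else 1) else 0

/-- Minkowski inner product a·b = η_{ij} a^i b^j. -/
def mdot (a b : Fin 4 → ℝ) : ℝ := ∑ i, ∑ j, eta i j * a i * b j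

/-- Lowering an index with η : k_i = η_{ij} k^j. -/
def lo (a : Fin 4 → ℝ) (i : Fin 4) : ℝ := ∑ j, eta i j * a j

lemma mdot_expand (a b : Fin 4 → ℝ) :
    mdot a b = -(a 0 * b 0) + a 1 * b 1 + a 2 * b 2 + a 3 * b 3 := by
  simp [mdot, eta, Fin.sum_univ_four]

def mdotL (c : Fin 4 → ℝ) : (Fin 4 → ℝ) →L[ℝ] ℝ :=
  -c 0 • ContinuousLinearMap.proj 0 + c 1 • ContinuousLinearMap.proj 1
    + c 2 • ContinuousLinearMap.proj 2 + c 3 • ContinuousLinearMap.proj 3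

lemma mdotL_apply (c h : Fin 4 → ℝ) : mdotL c h = mdot c h := by
  simp [mdotL, mdot_expand]

lemma divfree_algebra (f ρ q wi vi VV AW w0 w1 w2 w3 v0 v1 v2 v3 d0 d1 d2 d3 : ℝ)
    (hq : ρ * q = 1)
    (hnull : -(w0*w0)+w1*w1+w2*w2+w3*w3 = 0)
    (hS : -(v0*w0)+v1*w1+v2*w2+v3*w3 = -ρ)
    (hray : q * w0 * d0 + q * w1 * d1 + q * w2 * d2 + q * w3 * d3 = 0) :
    f*q^2*(q*wi) * (4*q + 2*q^2*(-(v0*w0)+v1*w1+v2*w2+v3*w3)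
        + q^3*(VV - AW)*(-(w0*w0)+w1*w1+w2*w2+w3*w3))
      + f*q^2 * (q^2*wi + q^3*vi*(-(w0*w0)+w1*w1+w2*w2+w3*w3)
        + q^4*(VV - AW)*wi*(-(w0*w0)+w1*w1+w2*w2+w3*w3)
        + q^3*wi*(-(v0*w0)+v1*w1+v2*w2+v3*w3))
      + (q*wi) * (2*f*q^5*(VV - AW)*(-(w0*w0)+w1*w1+w2*w2+w3*w3)
          + 2*f*q^4*(-(v0*w0)+v1*w1+v2*w2+v3*w3)
          + q^3*(w0*d0+w1*d1+w2*d2+w3*d3)) = 0 := by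
  linear_combination (-5*f*q^4*wi) * hq
    + (4*f*q^6*(VV - AW)*wi + f*q^5*vi) * hnull
    + (5*f*q^5*wi) * hS + (q^3*wi) * hray

set_option maxHeartbeats 8000000 in
set_option maxRecDepth 4000 in
/-- The radiative energy–momentum `t^{ij} = F r⁻² k^i k^j`, with `F` constant
along the outgoing null rays (`k^a ∂_a F = 0`), is divergence-free on
Ω = {x | r x > 0}. -/
theorem radiative_pseudotensor_divergence_free
    (z : ℝ → Fin 4 → ℝ) (hz : ContDiff ℝ (⊤ : ℕ∞) z)
    (v : ℝ → Fin 4 → ℝ) (hv : ∀ τ i, v τ i = deriv (fun t => z t i) τ)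
    (hunit : ∀ τ, mdot (v τ) (v τ) = -1)
    (hfut : ∀ τ, 0 < v τ 0)
    (u : (Fin 4 → ℝ) → ℝ)
    (hu : ∀ x, mdot (x - z (u x)) (x - z (u x)) = 0 ∧ z (u x) 0 ≤ x 0)
    (huniq : ∀ x τ, mdot (x - z τ) (x - z τ) = 0 → z τ 0 ≤ x 0 → τ = u x)
    (r : (Fin 4 → ℝ) → ℝ)
    (hr : ∀ x, r x = -mdot (v (u x)) (x - z (u x)))
    (k : (Fin 4 → ℝ) → Fin 4 → ℝ)
    (hk : ∀ x, k x = (r x)⁻¹ • (x - z (u x)))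
    (F : (Fin 4 → ℝ) → ℝ)
    (hF : ContDiffOn ℝ (⊤ : ℕ∞) F {x | 0 < r x})
    (hFray : ∀ x ∈ {x : Fin 4 → ℝ | 0 < r x},
      ∑ a, k x a * fderiv ℝ F x (Pi.single a 1) = 0) :
    ∀ x ∈ {x : Fin 4 → ℝ | 0 < r x}, ∀ i : Fin 4,
      ∑ j, fderiv ℝ (fun y => F y * (r y)⁻¹ ^ 2 * k y i * k y j) x
        (Pi.single j 1) = 0 := by
  classical
  intro x₀ hx₀ i
  have hrpos : (0:ℝ) < r x₀ := hx₀
  have hrne : r x₀ ≠ 0 := ne_of_gt hrpos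
  have h1top : ((⊤:ℕ∞) : WithTop ℕ∞) ≠ 0 := by simp
  -- smoothness of the coordinates of z and v
  have hzc : ∀ l, ContDiff ℝ (⊤:ℕ∞) (fun t => z t l) := fun l => contDiff_pi.mp hz l
  have hvc : ∀ l, ContDiff ℝ (⊤:ℕ∞) (fun t => v t l) := by
    intro l
    have hfl : (fun t => v t l) = deriv (fun t => z t l) := funext fun τ => hv τ l
    rw [hfl]
    exact (contDiff_infty_iff_deriv.mp (hzc l)).2
  have hzderiv : ∀ τ l, HasDerivAt (fun t => z t l) (v τ l) τ := by
    intro τ l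
    rw [hv τ l]
    exact ((hzc l).differentiable h1top τ).hasDerivAt
  have hvderiv : ∀ l, HasDerivAt (fun t => v t l)
      (deriv (fun t => v t l) (u x₀)) (u x₀) :=
    fun l => ((hvc l).differentiable h1top (u x₀)).hasDerivAt
  -- the defining function Φ
  set Φ : (Fin 4 → ℝ) × ℝ → ℝ :=
    fun p => mdot (p.1 - z p.2) (p.1 - z p.2) with hΦdef
  have hΦ0 : ∀ x, Φ (x, u x) = 0 := fun x => (hu x).1
  have hΦeq : Φ = fun p : (Fin 4 → ℝ) × ℝ =>
      -((p.1 0 - z p.2 0) * (p.1 0 - z p.2 0)) + (p.1 1 - z p.2 1) * (p.1 1 - z p.2 1)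
        + (p.1 2 - z p.2 2) * (p.1 2 - z p.2 2) + (p.1 3 - z p.2 3) * (p.1 3 - z p.2 3) :=
    funext fun p => by show mdot (p.1 - z p.2) (p.1 - z p.2) = _; rw [mdot_expand]; rfl
  have hcoord : ∀ l, ContDiff ℝ (⊤:ℕ∞) (fun p : (Fin 4 → ℝ) × ℝ => p.1 l - z p.2 l) := by
    intro l
    exact (((ContinuousLinearMap.proj l : (Fin 4 → ℝ) →L[ℝ] ℝ).contDiff).comp
      contDiff_fst).sub ((hzc l).comp contDiff_snd)
  have hΦc : ContDiff ℝ (⊤:ℕ∞) Φ := by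
    rw [hΦeq]
    exact ((((hcoord 0).mul (hcoord 0)).neg.add ((hcoord 1).mul (hcoord 1))).add
      ((hcoord 2).mul (hcoord 2))).add ((hcoord 3).mul (hcoord 3))
  -- derivative of Φ at p₀ = (x₀, u x₀)
  have hPcoord : ∀ l, HasFDerivAt (fun p : (Fin 4 → ℝ) × ℝ => p.1 l - z p.2 l)
      ((ContinuousLinearMap.proj l).comp (ContinuousLinearMap.fst ℝ (Fin 4 → ℝ) ℝ)
        - v (u x₀) l • (ContinuousLinearMap.snd ℝ (Fin 4 → ℝ) ℝ)) (x₀, u x₀) := by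
    intro l
    have h1 : HasFDerivAt (fun p : (Fin 4 → ℝ) × ℝ => p.1 l)
        ((ContinuousLinearMap.proj l).comp (ContinuousLinearMap.fst ℝ (Fin 4 → ℝ) ℝ))
        (x₀, u x₀) :=
      ((ContinuousLinearMap.proj l).comp (ContinuousLinearMap.fst ℝ (Fin 4 → ℝ) ℝ)).hasFDerivAt
    have h2 : HasFDerivAt (fun p : (Fin 4 → ℝ) × ℝ => z p.2 l)
        (v (u x₀) l • (ContinuousLinearMap.snd ℝ (Fin 4 → ℝ) ℝ)) (x₀, u x₀) :=
      (hzderiv (u x₀) l).comp_hasFDerivAt (f := fun p : (Fin 4 → ℝ) × ℝ => p.2) (x₀, u x₀)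
        (hasFDerivAt_snd (p := (x₀, u x₀)))
    exact h1.sub h2
  set dΦ : ((Fin 4 → ℝ) × ℝ) →L[ℝ] ℝ :=
    (2:ℝ) • ((mdotL (x₀ - z (u x₀))).comp (ContinuousLinearMap.fst ℝ (Fin 4 → ℝ) ℝ))
      + (2 * r x₀) • (ContinuousLinearMap.snd ℝ (Fin 4 → ℝ) ℝ) with hdΦdef
  have hvw : mdot (v (u x₀)) (x₀ - z (u x₀)) = -(r x₀) := by
    have := hr x₀; linarith
  have hΦd : HasFDerivAt Φ dΦ (x₀, u x₀) := by
    rw [hΦeq]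
    have H := ((((hPcoord 0).mul (hPcoord 0)).neg.add ((hPcoord 1).mul (hPcoord 1))).add
      ((hPcoord 2).mul (hPcoord 2))).add ((hPcoord 3).mul (hPcoord 3))
    refine H.congr_fderiv ?_
    refine ContinuousLinearMap.ext fun q => ?_
    have hmv := mdot_expand (v (u x₀)) (x₀ - z (u x₀))
    simp only [Pi.sub_apply] at hmv
    simp only [hdΦdef, ContinuousLinearMap.add_apply, ContinuousLinearMap.smul_apply,
      ContinuousLinearMap.coe_comp', Function.comp_apply, ContinuousLinearMap.coe_fst',
      ContinuousLinearMap.coe_snd', ContinuousLinearMap.proj_apply,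
      ContinuousLinearMap.coe_sub', Pi.sub_apply, ContinuousLinearMap.neg_apply,
      mdotL_apply, smul_eq_mul, mdot_expand, Pi.sub_apply]
    have hmv' : -(v (u x₀) 0 * (x₀ 0 - z (u x₀) 0)) + v (u x₀) 1 * (x₀ 1 - z (u x₀) 1)
        + v (u x₀) 2 * (x₀ 2 - z (u x₀) 2) + v (u x₀) 3 * (x₀ 3 - z (u x₀) 3) = -(r x₀) := by
      rw [← hmv]; exact hvw
    linear_combination (-2 * q.2) * hmv'

  -- the map used for the inverse function theorem
  set Hm : (Fin 4 → ℝ) × ℝ → (Fin 4 → ℝ) × ℝ := fun p => (p.1, Φ p) with hHdef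
  have hHc : ContDiffAt ℝ (⊤:ℕ∞) Hm (x₀, u x₀) := (ContDiff.prodMk contDiff_fst hΦc).contDiffAt
  set dHinv : ((Fin 4 → ℝ) × ℝ) →L[ℝ] ((Fin 4 → ℝ) × ℝ) :=
    (ContinuousLinearMap.fst ℝ (Fin 4 → ℝ) ℝ).prod
      ((2 * r x₀)⁻¹ • (ContinuousLinearMap.snd ℝ (Fin 4 → ℝ) ℝ
        - (2:ℝ) • ((mdotL (x₀ - z (u x₀))).comp
            (ContinuousLinearMap.fst ℝ (Fin 4 → ℝ) ℝ)))) with hdHinvdef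
  set dH : ((Fin 4 → ℝ) × ℝ) ≃L[ℝ] ((Fin 4 → ℝ) × ℝ) :=
    ContinuousLinearEquiv.equivOfInverse
      ((ContinuousLinearMap.fst ℝ (Fin 4 → ℝ) ℝ).prod dΦ) dHinv
      (by
        intro p
        refine Prod.ext rfl ?_
        simp only [hdHinvdef, hdΦdef, ContinuousLinearMap.prod_apply,
          ContinuousLinearMap.add_apply, ContinuousLinearMap.smul_apply,
          ContinuousLinearMap.coe_comp', Function.comp_apply,
          ContinuousLinearMap.coe_fst', ContinuousLinearMap.coe_snd',
          ContinuousLinearMap.coe_sub', Pi.sub_apply, smul_eq_mul]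
        field_simp
        ring)
      (by
        intro p
        refine Prod.ext rfl ?_
        simp only [hdHinvdef, hdΦdef, ContinuousLinearMap.prod_apply,
          ContinuousLinearMap.add_apply, ContinuousLinearMap.smul_apply,
          ContinuousLinearMap.coe_comp', Function.comp_apply,
          ContinuousLinearMap.coe_fst', ContinuousLinearMap.coe_snd',
          ContinuousLinearMap.coe_sub', Pi.sub_apply, smul_eq_mul]
        field_simp
        ring) with hdHdef
  have hHd' : HasFDerivAt Hm (dH : ((Fin 4 → ℝ) × ℝ) →L[ℝ] ((Fin 4 → ℝ) × ℝ)) (x₀, u x₀) := by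
    have hcoe : ((dH : ((Fin 4 → ℝ) × ℝ) ≃L[ℝ] ((Fin 4 → ℝ) × ℝ)) :
        ((Fin 4 → ℝ) × ℝ) →L[ℝ] ((Fin 4 → ℝ) × ℝ))
        = (ContinuousLinearMap.fst ℝ (Fin 4 → ℝ) ℝ).prod dΦ := rfl
    rw [hcoe]
    exact HasFDerivAt.prodMk hasFDerivAt_fst hΦd
  have hHs : HasStrictFDerivAt Hm
      (dH : ((Fin 4 → ℝ) × ℝ) →L[ℝ] ((Fin 4 → ℝ) × ℝ)) (x₀, u x₀) :=
    hHc.hasStrictFDerivAt' hHd' h1top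
  set linv : (Fin 4 → ℝ) × ℝ → (Fin 4 → ℝ) × ℝ :=
    hHs.localInverse Hm dH (x₀, u x₀) with hlinvdef
  have hHp0 : Hm (x₀, u x₀) = (x₀, (0:ℝ)) := Prod.ext rfl (hΦ0 x₀)
  have hev1 : ∀ᶠ q in nhds (x₀, (0:ℝ)), Hm (linv q) = q := by
    have := hHs.eventually_right_inverse
    rwa [hHp0] at this
  have hg : Filter.Tendsto (fun x : Fin 4 → ℝ => (x, (0:ℝ))) (nhds x₀) (nhds (x₀, (0:ℝ))) :=
    (continuous_id.prodMk continuous_const).tendsto x₀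
  have hev2 : ∀ᶠ x in nhds x₀, Hm (linv (x, (0:ℝ))) = (x, (0:ℝ)) := hg.eventually hev1
  set φ : (Fin 4 → ℝ) → ℝ := fun x => (linv (x, (0:ℝ))).2 with hφdef
  have hev3 : ∀ᶠ x in nhds x₀, Φ (x, φ x) = 0 := by
    refine hev2.mono fun x hx => ?_
    have h1 : (linv (x, (0:ℝ))).1 = x := congrArg Prod.fst hx
    have h2 : Φ ((linv (x, (0:ℝ))).1, (linv (x, (0:ℝ))).2) = 0 := by
      rw [Prod.mk.eta]; exact congrArg Prod.snd hx
    rwa [h1] at h2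
  have hlc : ContinuousAt linv (x₀, (0:ℝ)) := by
    have := hHs.localInverse_continuousAt
    rwa [hHp0] at this
  have hφc : ContinuousAt φ x₀ := by
    have h1 : Filter.Tendsto (fun x : Fin 4 → ℝ => linv (x, (0:ℝ))) (nhds x₀)
        (nhds (linv (x₀, (0:ℝ)))) := Filter.Tendsto.comp hlc hg
    exact (continuous_snd.tendsto (linv (x₀, (0:ℝ)))).comp h1
  have hφx₀ : φ x₀ = u x₀ := by
    have h := hHs.localInverse_apply_image
    rw [hHp0] at h
    exact congrArg Prod.snd h
  -- strict inequality z (u x₀) 0 < x₀ 0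
  have hlt : z (u x₀) 0 < x₀ 0 := by
    rcases lt_or_eq_of_le (hu x₀).2 with h | h
    · exact h
    · exfalso
      have hn := (hu x₀).1
      rw [mdot_expand] at hn
      simp only [Pi.sub_apply] at hn
      have hw0 : x₀ 0 - z (u x₀) 0 = 0 := by linarith
      have h1 : x₀ 1 - z (u x₀) 1 = 0 := by
        nlinarith [sq_nonneg (x₀ 1 - z (u x₀) 1), sq_nonneg (x₀ 2 - z (u x₀) 2),
          sq_nonneg (x₀ 3 - z (u x₀) 3)]
      have h2 : x₀ 2 - z (u x₀) 2 = 0 := by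
        nlinarith [sq_nonneg (x₀ 1 - z (u x₀) 1), sq_nonneg (x₀ 2 - z (u x₀) 2),
          sq_nonneg (x₀ 3 - z (u x₀) 3)]
      have h3 : x₀ 3 - z (u x₀) 3 = 0 := by
        nlinarith [sq_nonneg (x₀ 1 - z (u x₀) 1), sq_nonneg (x₀ 2 - z (u x₀) 2),
          sq_nonneg (x₀ 3 - z (u x₀) 3)]
      have hmvx := mdot_expand (v (u x₀)) (x₀ - z (u x₀))
      simp only [Pi.sub_apply] at hmvx
      rw [hvw, hw0, h1, h2, h3] at hmvx
      simp at hmvx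
      exact hrne (by linarith)
  have hzphic : ContinuousAt (fun x : Fin 4 → ℝ => x 0 - z (φ x) 0) x₀ :=
    ((continuous_apply (0 : Fin 4)).continuousAt).sub
      (((hzc 0).continuous.continuousAt).comp hφc)
  have h0lt : 0 < x₀ 0 - z (φ x₀) 0 := by rw [hφx₀]; linarith
  have hevlt : ∀ᶠ x in nhds x₀, 0 < x 0 - z (φ x) 0 := hzphic.eventually (lt_mem_nhds h0lt)
  have hequ : ∀ᶠ x in nhds x₀, φ x = u x := by
    refine (hev3.and hevlt).mono fun x hx => ?_
    exact huniq x (φ x) hx.1 (by linarith [hx.2])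
  -- u is differentiable at x₀
  have hlicd : ContDiffAt ℝ (⊤:ℕ∞) linv (x₀, (0:ℝ)) := by
    have h := hHc.to_localInverse (hf' := hHd') (hn := h1top)
    rw [hHp0] at h
    exact h
  have hφcd : ContDiffAt ℝ (⊤:ℕ∞) φ x₀ :=
    contDiffAt_snd.comp x₀ (hlicd.comp x₀ (ContDiffAt.prodMk contDiffAt_id contDiffAt_const))
  have hequ' : φ =ᶠ[nhds x₀] u := hequ
  have hud : DifferentiableAt ℝ u x₀ :=
    (hequ'.differentiableAt_iff).mp (hφcd.differentiableAt h1top)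
  set U : (Fin 4 → ℝ) →L[ℝ] ℝ := (-(r x₀)⁻¹) • mdotL (x₀ - z (u x₀)) with hUdef
  have hu' : HasFDerivAt u U x₀ := by
    have h1 : HasFDerivAt (fun x : Fin 4 → ℝ => (x, u x))
        ((ContinuousLinearMap.id ℝ (Fin 4 → ℝ)).prod (fderiv ℝ u x₀)) x₀ :=
      HasFDerivAt.prodMk (hasFDerivAt_id x₀) hud.hasFDerivAt
    have h2 := hΦd.comp x₀ h1
    have h4 : (fun x : Fin 4 → ℝ => Φ (x, u x)) = fun _ : Fin 4 → ℝ => (0:ℝ) := funext hΦ0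
    rw [show (Φ ∘ fun x : Fin 4 → ℝ => (x, u x)) = fun x : Fin 4 → ℝ => Φ (x, u x) from rfl,
      h4] at h2
    have h5 := h2.unique (hasFDerivAt_const (0:ℝ) x₀)
    have h6 : fderiv ℝ u x₀ = U := by
      refine ContinuousLinearMap.ext fun hvec => ?_
      have h7 := congrArg (fun (L : (Fin 4 → ℝ) →L[ℝ] ℝ) => L hvec) h5
      simp only [hdΦdef, hUdef, ContinuousLinearMap.comp_apply,
        ContinuousLinearMap.prod_apply, ContinuousLinearMap.add_apply,
        ContinuousLinearMap.smul_apply, ContinuousLinearMap.coe_comp',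
        Function.comp_apply, ContinuousLinearMap.coe_fst', ContinuousLinearMap.coe_snd',
        ContinuousLinearMap.id_apply, ContinuousLinearMap.zero_apply, smul_eq_mul] at h7 ⊢
      have : (fderiv ℝ u x₀) hvec = -(r x₀)⁻¹ * mdotL (x₀ - z (u x₀)) hvec := by
        field_simp
        linarith
      exact this
    exact h6 ▸ hud.hasFDerivAt

  -- derivatives of coordinates of w and v∘u
  set Wd : Fin 4 → ((Fin 4 → ℝ) →L[ℝ] ℝ) := fun l =>
    (ContinuousLinearMap.proj l) - v (u x₀) l • U with hWddef
  have hwd : ∀ l, HasFDerivAt (fun x : Fin 4 → ℝ => x l - z (u x) l) (Wd l) x₀ := by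
    intro l
    have h1 : HasFDerivAt (fun x : Fin 4 → ℝ => x l)
        (ContinuousLinearMap.proj l : (Fin 4 → ℝ) →L[ℝ] ℝ) x₀ :=
      (ContinuousLinearMap.proj l : (Fin 4 → ℝ) →L[ℝ] ℝ).hasFDerivAt
    have h2 : HasFDerivAt (fun x : Fin 4 → ℝ => z (u x) l) (v (u x₀) l • U) x₀ :=
      (hzderiv (u x₀) l).comp_hasFDerivAt x₀ hu'
    exact h1.sub h2
  have hvd : ∀ l, HasFDerivAt (fun x : Fin 4 → ℝ => v (u x) l)
      (deriv (fun t => v t l) (u x₀) • U) x₀ :=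
    fun l => (hvderiv l).comp_hasFDerivAt x₀ hu'
  -- derivative of r
  set R : (Fin 4 → ℝ) →L[ℝ] ℝ :=
    (mdot (v (u x₀)) (v (u x₀))
      - mdot (fun l => deriv (fun t => v t l) (u x₀)) (x₀ - z (u x₀))) • U
      - mdotL (v (u x₀)) with hRdef
  have hrfun : r = fun x => -(-(v (u x) 0 * (x 0 - z (u x) 0))
      + v (u x) 1 * (x 1 - z (u x) 1) + v (u x) 2 * (x 2 - z (u x) 2)
      + v (u x) 3 * (x 3 - z (u x) 3)) :=
    funext fun x => by rw [hr x, mdot_expand]; rfl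
  have hrd : HasFDerivAt r R x₀ := by
    rw [hrfun]
    have H := (((((hvd 0).mul (hwd 0)).neg.add ((hvd 1).mul (hwd 1))).add
      ((hvd 2).mul (hwd 2))).add ((hvd 3).mul (hwd 3))).neg
    refine H.congr_fderiv ?_
    refine ContinuousLinearMap.ext fun q => ?_
    simp only [hRdef, hWddef, hUdef, ContinuousLinearMap.add_apply,
      ContinuousLinearMap.smul_apply, ContinuousLinearMap.neg_apply,
      ContinuousLinearMap.sub_apply, ContinuousLinearMap.coe_sub', Pi.sub_apply,
      ContinuousLinearMap.proj_apply, mdotL_apply, smul_eq_mul, mdot_expand, Pi.sub_apply]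
    ring
  -- Ω is a neighborhood of x₀ and F is differentiable there
  have hΩmem : {x : Fin 4 → ℝ | 0 < r x} ∈ nhds x₀ :=
    hrd.continuousAt.eventually (lt_mem_nhds hrpos)
  have hFd : HasFDerivAt F (fderiv ℝ F x₀) x₀ :=
    ((hF.contDiffAt hΩmem).differentiableAt h1top).hasFDerivAt
  -- derivative of coordinates of k
  have hkfun : ∀ l, (fun x => k x l) = fun x => (r x)⁻¹ * (x l - z (u x) l) :=
    fun l => funext fun x => by rw [hk x]; rfl
  have hkval : ∀ l, k x₀ l = (r x₀)⁻¹ * (x₀ l - z (u x₀) l) :=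
    fun l => by rw [hk x₀]; rfl
  have hinvd : HasFDerivAt (fun x => (r x)⁻¹) ((-((r x₀) ^ 2)⁻¹) • R) x₀ :=
    (hasDerivAt_inv hrne).comp_hasFDerivAt x₀ hrd
  have hkd : ∀ l, HasFDerivAt (fun x => k x l)
      ((r x₀)⁻¹ • Wd l + (x₀ l - z (u x₀) l) • ((-((r x₀) ^ 2)⁻¹) • R)) x₀ := by
    intro l
    rw [hkfun l]
    exact hinvd.mul (hwd l)
  have hpowd : HasFDerivAt (fun y => (r y)⁻¹ ^ 2)
      ((2 * (r x₀)⁻¹ ^ 1 * (-((r x₀) ^ 2)⁻¹)) • R) x₀ :=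
    ((hasDerivAt_inv hrne).pow 2).comp_hasFDerivAt x₀ hrd
  have hbig : ∀ j : Fin 4, HasFDerivAt (fun y => F y * (r y)⁻¹ ^ 2 * k y i * k y j)
      ((F x₀ * (r x₀)⁻¹ ^ 2 * k x₀ i) •
          ((r x₀)⁻¹ • Wd j + (x₀ j - z (u x₀) j) • ((-((r x₀) ^ 2)⁻¹) • R))
        + k x₀ j • ((F x₀ * (r x₀)⁻¹ ^ 2) •
            ((r x₀)⁻¹ • Wd i + (x₀ i - z (u x₀) i) • ((-((r x₀) ^ 2)⁻¹) • R))
          + k x₀ i • (F x₀ • ((2 * (r x₀)⁻¹ ^ 1 * (-((r x₀) ^ 2)⁻¹)) • R)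
            + (r x₀)⁻¹ ^ 2 • fderiv ℝ F x₀))) x₀ :=
    fun j => ((hFd.mul hpowd).mul (hkd i)).mul (hkd j)
  have hA := hFray x₀ hx₀
  rw [Fin.sum_univ_four] at hA
  simp only [hkval] at hA
  have hnull := (hu x₀).1
  rw [mdot_expand] at hnull
  simp only [Pi.sub_apply] at hnull
  have hmv := mdot_expand (v (u x₀)) (x₀ - z (u x₀))
  simp only [Pi.sub_apply] at hmv
  rw [hvw] at hmv
  have hvvu := hunit (u x₀)
  rw [mdot_expand] at hvvu
  rw [Fin.sum_univ_four]
  rw [(hbig 0).fderiv, (hbig 1).fderiv, (hbig 2).fderiv, (hbig 3).fderiv]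
  have hq0 : r x₀ * (r x₀)⁻¹ = 1 := mul_inv_cancel₀ hrne
  have hnull0 : -((x₀ 0 - z (u x₀) 0)*(x₀ 0 - z (u x₀) 0))
      + (x₀ 1 - z (u x₀) 1)*(x₀ 1 - z (u x₀) 1)
      + (x₀ 2 - z (u x₀) 2)*(x₀ 2 - z (u x₀) 2)
      + (x₀ 3 - z (u x₀) 3)*(x₀ 3 - z (u x₀) 3) = 0 := by linear_combination hnull
  have hS0 : -(v (u x₀) 0 * (x₀ 0 - z (u x₀) 0)) + v (u x₀) 1 * (x₀ 1 - z (u x₀) 1)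
      + v (u x₀) 2 * (x₀ 2 - z (u x₀) 2) + v (u x₀) 3 * (x₀ 3 - z (u x₀) 3)
      = -(r x₀) := by linear_combination -hmv
  have hray0 : (r x₀)⁻¹ * (x₀ 0 - z (u x₀) 0) * (fderiv ℝ F x₀ (Pi.single 0 1))
      + (r x₀)⁻¹ * (x₀ 1 - z (u x₀) 1) * (fderiv ℝ F x₀ (Pi.single 1 1))
      + (r x₀)⁻¹ * (x₀ 2 - z (u x₀) 2) * (fderiv ℝ F x₀ (Pi.single 2 1))
      + (r x₀)⁻¹ * (x₀ 3 - z (u x₀) 3) * (fderiv ℝ F x₀ (Pi.single 3 1)) = 0 := by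
    linear_combination hA
  have hm0 : ∀ c : Fin 4 → ℝ, mdot c (Pi.single 0 1) = -(c 0) := by
    intro c; rw [mdot_expand]; simp
  have hm1 : ∀ c : Fin 4 → ℝ, mdot c (Pi.single 1 1) = c 1 := by
    intro c; rw [mdot_expand]; simp
  have hm2 : ∀ c : Fin 4 → ℝ, mdot c (Pi.single 2 1) = c 2 := by
    intro c; rw [mdot_expand]; simp
  have hm3 : ∀ c : Fin 4 → ℝ, mdot c (Pi.single 3 1) = c 3 := by
    intro c; rw [mdot_expand]; simp
  simp only [hRdef, hWddef, hUdef, hkval, ContinuousLinearMap.add_apply,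
    ContinuousLinearMap.smul_apply, ContinuousLinearMap.sub_apply,
    ContinuousLinearMap.coe_sub', ContinuousLinearMap.proj_apply, mdotL_apply,
    smul_eq_mul, hm0, hm1, hm2, hm3, Pi.sub_apply]
  have hi := (by decide : ∀ i' : Fin 4, i' = 0 ∨ i' = 1 ∨ i' = 2 ∨ i' = 3) i
  rcases hi with rfl | rfl | rfl | rfl
  · simp only [Pi.single_apply, Fin.isValue, Fin.reduceEq, reduceIte]
    linear_combination divfree_algebra (F x₀) (r x₀) ((r x₀)⁻¹)
      (x₀ 0 - z (u x₀) 0) (v (u x₀) 0)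
      (mdot (v (u x₀)) (v (u x₀)))
      (mdot (fun l => deriv (fun t => v t l) (u x₀)) (x₀ - z (u x₀)))
      (x₀ 0 - z (u x₀) 0) (x₀ 1 - z (u x₀) 1) (x₀ 2 - z (u x₀) 2) (x₀ 3 - z (u x₀) 3)
      (v (u x₀) 0) (v (u x₀) 1) (v (u x₀) 2) (v (u x₀) 3)
      (fderiv ℝ F x₀ (Pi.single 0 1)) (fderiv ℝ F x₀ (Pi.single 1 1))
      (fderiv ℝ F x₀ (Pi.single 2 1)) (fderiv ℝ F x₀ (Pi.single 3 1))
      hq0 hnull0 hS0 hray0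
  · simp only [Pi.single_apply, Fin.isValue, Fin.reduceEq, reduceIte]
    linear_combination divfree_algebra (F x₀) (r x₀) ((r x₀)⁻¹)
      (x₀ 1 - z (u x₀) 1) (v (u x₀) 1)
      (mdot (v (u x₀)) (v (u x₀)))
      (mdot (fun l => deriv (fun t => v t l) (u x₀)) (x₀ - z (u x₀)))
      (x₀ 0 - z (u x₀) 0) (x₀ 1 - z (u x₀) 1) (x₀ 2 - z (u x₀) 2) (x₀ 3 - z (u x₀) 3)
      (v (u x₀) 0) (v (u x₀) 1) (v (u x₀) 2) (v (u x₀) 3)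
      (fderiv ℝ F x₀ (Pi.single 0 1)) (fderiv ℝ F x₀ (Pi.single 1 1))
      (fderiv ℝ F x₀ (Pi.single 2 1)) (fderiv ℝ F x₀ (Pi.single 3 1))
      hq0 hnull0 hS0 hray0
  · simp only [Pi.single_apply, Fin.isValue, Fin.reduceEq, reduceIte]
    linear_combination divfree_algebra (F x₀) (r x₀) ((r x₀)⁻¹)
      (x₀ 2 - z (u x₀) 2) (v (u x₀) 2)
      (mdot (v (u x₀)) (v (u x₀)))
      (mdot (fun l => deriv (fun t => v t l) (u x₀)) (x₀ - z (u x₀)))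
      (x₀ 0 - z (u x₀) 0) (x₀ 1 - z (u x₀) 1) (x₀ 2 - z (u x₀) 2) (x₀ 3 - z (u x₀) 3)
      (v (u x₀) 0) (v (u x₀) 1) (v (u x₀) 2) (v (u x₀) 3)
      (fderiv ℝ F x₀ (Pi.single 0 1)) (fderiv ℝ F x₀ (Pi.single 1 1))
      (fderiv ℝ F x₀ (Pi.single 2 1)) (fderiv ℝ F x₀ (Pi.single 3 1))
      hq0 hnull0 hS0 hray0
  · simp only [Pi.single_apply, Fin.isValue, Fin.reduceEq, reduceIte]
    linear_combination divfree_algebra (F x₀) (r x₀) ((r x₀)⁻¹)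
      (x₀ 3 - z (u x₀) 3) (v (u x₀) 3)
      (mdot (v (u x₀)) (v (u x₀)))
      (mdot (fun l => deriv (fun t => v t l) (u x₀)) (x₀ - z (u x₀)))
      (x₀ 0 - z (u x₀) 0) (x₀ 1 - z (u x₀) 1) (x₀ 2 - z (u x₀) 2) (x₀ 3 - z (u x₀) 3)
      (v (u x₀) 0) (v (u x₀) 1) (v (u x₀) 2) (v (u x₀) 3)
      (fderiv ℝ F x₀ (Pi.single 0 1)) (fderiv ℝ F x₀ (Pi.single 1 1))
      (fderiv ℝ F x₀ (Pi.single 2 1)) (fderiv ℝ F x₀ (Pi.single 3 1))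
      hq0 hnull0 hS0 hray0
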